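/- Let G = (V, E) be a cubic graph with V = {v_1,…,v_n} and E = {e_1,…,e_m}, and for each vertex v_i let E_i be the set of three edges incident to v_i. Construct the CAPR instance I with lexicographic preferences as follows: applicants a_1,…,a_n, one per vertex, each of capacity 4; courses V ∪ E, each of capacity 1; the preference list of a_i consists of v_i followed by the three courses of E_i in some fixed order; the prerequisites, identical for all applicants, are v_i → e for every vertex v_i and every edge e ∈ E_i. Then, for every positive integer K, the graph G has an independent set of size at least K if and only if I admits a Pareto optimal matching of cardinality at least m + K. -/

import Mathlib

open Finset

def bundle {A C : Type*} [DecidableEq A] [DecidableEq C]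
    (M : Finset (A × C)) (a : A) : Finset C :=
  (M.filter fun p => p.1 = a).image Prod.snd

def slots {A C : Type*} [DecidableEq C] (M : Finset (A × C)) (c : C) : ℕ :=
  (M.filter fun p => p.2 = c).card

/-- Lexicographic comparison of bundles w.r.t. a preference list (earlier = better):
the most preferred course in the symmetric difference belongs to `S₁`. -/
def lexPrefers {C : Type*} [DecidableEq C] (l : List C) (S₁ S₂ : Finset C) : Prop :=
  ∃ c ∈ S₁ \ S₂, ∀ d ∈ (S₁ \ S₂) ∪ (S₂ \ S₁), l.idxOf c ≤ l.idxOf d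

def IsFeasible {A C : Type*} (pref : A → List C) (qA : A → ℕ)
    (prereq : A → C → C → Prop) (a : A) (S : Finset C) : Prop :=
  (∀ c ∈ S, c ∈ pref a) ∧ S.card ≤ qA a ∧
    ∀ c ∈ S, ∀ c', prereq a c c' → c' ∈ S

def IsMatching {A C : Type*} [DecidableEq A] [DecidableEq C]
    (pref : A → List C) (qA : A → ℕ) (qC : C → ℕ)
    (prereq : A → C → C → Prop) (M : Finset (A × C)) : Prop :=
  (∀ a, IsFeasible pref qA prereq a (bundle M a)) ∧ ∀ c, slots M c ≤ qC c

def Dominates {A C : Type*} [DecidableEq A] [DecidableEq C]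
    (pref : A → List C) (M' M : Finset (A × C)) : Prop :=
  (∃ a, lexPrefers (pref a) (bundle M' a) (bundle M a)) ∧
    ∀ a, ¬ lexPrefers (pref a) (bundle M a) (bundle M' a)

def ParetoOptimal {A C : Type*} [DecidableEq A] [DecidableEq C]
    (pref : A → List C) (qA : A → ℕ) (qC : C → ℕ)
    (prereq : A → C → C → Prop) (M : Finset (A × C)) : Prop :=
  IsMatching pref qA qC prereq M ∧
    ∀ M', IsMatching pref qA qC prereq M' → ¬ Dominates pref M' M

/-- Vertex `v` is incident to the edge `e_j` (whose endpoints are given by `ep`). -/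
def Incid {n m : ℕ} (ep : Fin m → Fin n × Fin n) (v : Fin n) (j : Fin m) : Prop :=
  v = (ep j).1 ∨ v = (ep j).2

instance {n m : ℕ} (ep : Fin m → Fin n × Fin n) (v : Fin n) (j : Fin m) :
    Decidable (Incid ep v j) := by unfold Incid; infer_instance

set_option linter.unusedSectionVars false
set_option linter.unusedVariables false

section Aux
variable {A C : Type*} [DecidableEq A] [DecidableEq C]

lemma mem_bundle {M : Finset (A × C)} {a : A} {c : C} :
    c ∈ bundle M a ↔ (a, c) ∈ M := by
  simp only [bundle, Finset.mem_image, Finset.mem_filter]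
  constructor
  · rintro ⟨⟨a', c'⟩, ⟨hp, rfl⟩, rfl⟩; exact hp
  · intro h; exact ⟨(a, c), ⟨h, rfl⟩, rfl⟩

lemma bundle_insert (pa : A) (pc : C) (M : Finset (A × C)) (a : A) :
    bundle (insert (pa, pc) M) a =
      if pa = a then insert pc (bundle M a) else bundle M a := by
  ext c
  rw [mem_bundle, Finset.mem_insert, Prod.mk.injEq]
  by_cases h : pa = a
  · subst h
    simp [mem_bundle, eq_comm]
  · simp only [if_neg h, mem_bundle]
    constructor
    · rintro (⟨rfl, -⟩ | hm)
      · exact absurd rfl h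
      · exact hm
    · intro hm; exact Or.inr hm

lemma card_eq_sum_bundle [Fintype A] (M : Finset (A × C)) :
    M.card = ∑ a, (bundle M a).card := by
  rw [Finset.card_eq_sum_card_fiberwise (f := Prod.fst) (t := Finset.univ)
    (fun p _ => Finset.mem_univ _)]
  refine Finset.sum_congr rfl fun a _ => ?_
  refine (Finset.card_image_of_injOn ?_).symm
  intro p hp q hq h
  simp only [Finset.mem_coe, Finset.mem_filter] at hp hq
  exact Prod.ext (hp.2.trans hq.2.symm) h

lemma card_eq_sum_slots [Fintype C] (M : Finset (A × C)) :
    M.card = ∑ c, slots M c :=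
  Finset.card_eq_sum_card_fiberwise (f := Prod.snd) (t := Finset.univ)
    (fun p _ => Finset.mem_univ _)

end Aux

def wt {C : Type*} [DecidableEq C] (l : List C) (S : Finset C) : ℕ :=
  ∑ c ∈ S, 2 ^ (l.length - 1 - l.idxOf c)

lemma sum_range_two_pow (E : ℕ) : ∑ k ∈ Finset.range E, 2 ^ k = 2 ^ E - 1 := by
  induction E with
  | zero => simp
  | succ e ih =>
    rw [Finset.sum_range_succ, ih, pow_succ]
    have : 0 < 2 ^ e := pow_pos (by norm_num) e
    omega

lemma sum_two_pow_lt {F : Finset ℕ} {E : ℕ} (h : ∀ k ∈ F, k < E) :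
    ∑ k ∈ F, 2 ^ k < 2 ^ E := by
  have h1 : ∑ k ∈ F, 2 ^ k ≤ ∑ k ∈ Finset.range E, 2 ^ k :=
    Finset.sum_le_sum_of_subset (fun k hk => Finset.mem_range.2 (h k hk))
  have h2 : 0 < 2 ^ E := pow_pos (by norm_num) E
  rw [sum_range_two_pow] at h1
  omega

lemma wt_lt_of_min {C : Type*} [DecidableEq C] {l : List C} {S1 S2 : Finset C}
    (h1 : ∀ c ∈ S1, c ∈ l) (h2 : ∀ c ∈ S2, c ∈ l) {c : C} (hc : c ∈ S1 \ S2)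
    (hmin : ∀ d ∈ (S1 \ S2) ∪ (S2 \ S1), l.idxOf c ≤ l.idxOf d) :
    wt l S2 < wt l S1 := by
  obtain ⟨hcS1, hcS2⟩ := Finset.mem_sdiff.1 hc
  set N := l.length with hN
  set D := l.idxOf c with hD
  have hDN : D < N := List.idxOf_lt_length_iff.2 (h1 c hcS1)
  have hidx : ∀ x ∈ S2, ¬ l.idxOf x < D → D < l.idxOf x := by
    intro x hx hxD
    rcases Nat.lt_or_ge D (l.idxOf x) with h | h
    · exact h
    · have hxd : l.idxOf x = D := by omega
      have : x = c := (List.idxOf_inj (h2 x hx)).1 (hxd.trans hD)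
      exact absurd (this ▸ hx) hcS2
  have hlow : S1.filter (fun x => l.idxOf x < D) = S2.filter (fun x => l.idxOf x < D) := by
    ext x
    simp only [Finset.mem_filter]
    constructor
    · rintro ⟨hx, hxD⟩
      refine ⟨?_, hxD⟩
      by_contra hx2
      have := hmin x (Finset.mem_union_left _ (Finset.mem_sdiff.2 ⟨hx, hx2⟩))
      omega
    · rintro ⟨hx, hxD⟩
      refine ⟨?_, hxD⟩
      by_contra hx1
      have := hmin x (Finset.mem_union_right _ (Finset.mem_sdiff.2 ⟨hx, hx1⟩))
      omega
  have e1 := (Finset.sum_filter_add_sum_filter_not S1 (fun x => l.idxOf x < D)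
    (fun x => 2 ^ (N - 1 - l.idxOf x)))
  have e2 := (Finset.sum_filter_add_sum_filter_not S2 (fun x => l.idxOf x < D)
    (fun x => 2 ^ (N - 1 - l.idxOf x)))
  have hhigh2 : ∑ x ∈ S2.filter (fun x => ¬ l.idxOf x < D), 2 ^ (N - 1 - l.idxOf x)
      < 2 ^ (N - 1 - D) := by
    have hinj : Set.InjOn (fun x => N - 1 - l.idxOf x)
        (S2.filter (fun x => ¬ l.idxOf x < D)) := by
      intro x hx y hy hxy
      simp only [Finset.coe_filter, Set.mem_setOf_eq] at hx hy
      have hx' := hidx x hx.1 hx.2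
      have hy' := hidx y hy.1 hy.2
      have hxN : l.idxOf x < N := List.idxOf_lt_length_iff.2 (h2 x hx.1)
      have hyN : l.idxOf y < N := List.idxOf_lt_length_iff.2 (h2 y hy.1)
      have : l.idxOf x = l.idxOf y := by simp only at hxy; omega
      exact (List.idxOf_inj (h2 x hx.1)).1 this
    have himg : (∑ x ∈ S2.filter (fun x => ¬ l.idxOf x < D), 2 ^ (N - 1 - l.idxOf x))
        = ∑ k ∈ (S2.filter (fun x => ¬ l.idxOf x < D)).image (fun x => N - 1 - l.idxOf x),
            2 ^ k :=
      (Finset.sum_image (fun x hx y hy => hinj (Finset.mem_coe.2 hx) (Finset.mem_coe.2 hy))).symm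
    rw [himg]
    refine sum_two_pow_lt ?_
    intro k hk
    simp only [Finset.mem_image, Finset.mem_filter] at hk
    obtain ⟨x, ⟨hx, hxD⟩, rfl⟩ := hk
    have hx' := hidx x hx hxD
    have hxN : l.idxOf x < N := List.idxOf_lt_length_iff.2 (h2 x hx)
    omega
  have hhigh1 : 2 ^ (N - 1 - D) ≤
      ∑ x ∈ S1.filter (fun x => ¬ l.idxOf x < D), 2 ^ (N - 1 - l.idxOf x) := by
    have hcf : c ∈ S1.filter (fun x => ¬ l.idxOf x < D) :=
      Finset.mem_filter.2 ⟨hcS1, by omega⟩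
    have := Finset.single_le_sum (f := fun x => 2 ^ (N - 1 - l.idxOf x))
      (fun x _ => Nat.zero_le _) hcf
    simpa [← hD] using this
  have hw1 : wt l S1 = ∑ x ∈ S1, 2 ^ (N - 1 - l.idxOf x) := rfl
  have hw2 : wt l S2 = ∑ x ∈ S2, 2 ^ (N - 1 - l.idxOf x) := rfl
  rw [hw1, hw2, ← e1, ← e2, hlow]
  omega

lemma lexPrefers_iff_wt {C : Type*} [DecidableEq C] {l : List C} {S1 S2 : Finset C}
    (h1 : ∀ c ∈ S1, c ∈ l) (h2 : ∀ c ∈ S2, c ∈ l) :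
    lexPrefers l S1 S2 ↔ wt l S2 < wt l S1 := by
  constructor
  · rintro ⟨c, hc, hmin⟩; exact wt_lt_of_min h1 h2 hc hmin
  · intro h
    have hne : ((S1 \ S2) ∪ (S2 \ S1)).Nonempty := by
      rw [Finset.nonempty_iff_ne_empty]
      intro he
      rw [Finset.union_eq_empty] at he
      have : S1 = S2 := Finset.Subset.antisymm
        (Finset.sdiff_eq_empty_iff_subset.1 he.1) (Finset.sdiff_eq_empty_iff_subset.1 he.2)
      rw [this] at h; exact lt_irrefl _ h
    obtain ⟨c, hc, hmin⟩ := Finset.exists_min_image _ (fun x => l.idxOf x) hne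
    rcases Finset.mem_union.1 hc with hc1 | hc2
    · exact ⟨c, hc1, hmin⟩
    · have := wt_lt_of_min h2 h1 hc2 (fun d hd => hmin d (by rwa [Finset.union_comm]))
      omega

lemma eq_full_of_wt_ge {C : Type*} [DecidableEq C] {l : List C} {S : Finset C}
    (hS : ∀ c ∈ S, c ∈ l) (h : wt l l.toFinset ≤ wt l S) : S = l.toFinset := by
  by_contra hne
  have hsub : S ⊆ l.toFinset := fun c hc => List.mem_toFinset.2 (hS c hc)
  have hne' : ((l.toFinset \ S) ∪ (S \ l.toFinset)).Nonempty := by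
    rw [Finset.nonempty_iff_ne_empty]
    intro he
    rw [Finset.union_eq_empty] at he
    exact hne (Finset.Subset.antisymm hsub (Finset.sdiff_eq_empty_iff_subset.1 he.1))
  obtain ⟨c, hc, hmin⟩ := Finset.exists_min_image _ (fun x => l.idxOf x) hne'
  rcases Finset.mem_union.1 hc with hc1 | hc2
  · have := wt_lt_of_min (fun c hc => List.mem_toFinset.1 hc) hS hc1 hmin
    omega
  · exact absurd (Finset.mem_sdiff.1 hc2).1 (fun hx => (Finset.mem_sdiff.1 hc2).2 (hsub hx))

/-- let `G` be a cubic graph with vertices `Fin n` and edges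
`e_1, …, e_m` given by their endpoints `ep` (loopless, pairwise distinct as
unordered pairs, every vertex incident to exactly 3 edges).  The CAPR instance `I`
with lexicographic preferences has one applicant per vertex, each of capacity 4;
one course per vertex and per edge, each of capacity 1; the preference list of
`a_i` is `v_i` followed by the three courses of `E_i` in some fixed order
(`elist i`); the prerequisites (identical for all applicants) are `v → e` for
every vertex `v` and incident edge `e`.  Then for every positive integer `K`,
`G` has an independent set of size at least `K` iff `I` admits a Pareto optimal
matching of cardinality at least `m + K`. -/
theorem cubic_indep_set_iff_large_pom {n m : ℕ}
    (ep : Fin m → Fin n × Fin n)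
    (hloop : ∀ j, (ep j).1 ≠ (ep j).2)
    (hdist : Function.Injective fun j => s((ep j).1, (ep j).2))
    (hcubic : ∀ v : Fin n, (Finset.univ.filter fun j => Incid ep v j).card = 3)
    (elist : Fin n → List (Fin m))
    (helist : ∀ i, (elist i).Nodup ∧ ∀ j : Fin m, j ∈ elist i ↔ Incid ep i j)
    (K : ℕ) (hK : 0 < K) :
    (∃ S : Finset (Fin n),
        (∀ j : Fin m, ¬ ((ep j).1 ∈ S ∧ (ep j).2 ∈ S)) ∧ K ≤ S.card) ↔
      ∃ M : Finset (Fin n × ((Fin n) ⊕ (Fin m))),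
        ParetoOptimal
          (fun i => Sum.inl i :: (elist i).map Sum.inr)
          (fun _ => 4) (fun _ => 1)
          (fun _ c c' => ∃ (v : Fin n) (j : Fin m),
            c = Sum.inl v ∧ c' = Sum.inr j ∧ Incid ep v j)
          M ∧
        m + K ≤ M.card := by
  classical
  set pref : Fin n → List ((Fin n) ⊕ (Fin m)) :=
    fun i => Sum.inl i :: (elist i).map Sum.inr with hpref
  set prereq : Fin n → ((Fin n) ⊕ (Fin m)) → ((Fin n) ⊕ (Fin m)) → Prop :=
    fun _ c c' => ∃ (v : Fin n) (j : Fin m),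
      c = Sum.inl v ∧ c' = Sum.inr j ∧ Incid ep v j with hprereq
  have hlen : ∀ i, (elist i).length = 3 := by
    intro i
    have h1 := (helist i).1
    have h2 : (elist i).toFinset = Finset.univ.filter (fun j => Incid ep i j) := by
      ext j; simp [(helist i).2 j]
    have hcard := hcubic i
    rw [← h2, List.toFinset_card_of_nodup h1] at hcard
    exact hcard
  have hpreflen : ∀ i, (pref i).length = 4 := fun i => by
    simp [hpref, hlen i]
  have hmem_pref : ∀ i (c : (Fin n) ⊕ (Fin m)),
      c ∈ pref i ↔ c = Sum.inl i ∨ ∃ j, Incid ep i j ∧ c = Sum.inr j := by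
    intro i c
    simp only [hpref, List.mem_cons, List.mem_map]
    constructor
    · rintro (rfl | ⟨j, hj, rfl⟩)
      · exact Or.inl rfl
      · exact Or.inr ⟨j, ((helist i).2 j).1 hj, rfl⟩
    · rintro (rfl | ⟨j, hj, rfl⟩)
      · exact Or.inl rfl
      · exact Or.inr ⟨j, ((helist i).2 j).2 hj, rfl⟩
  constructor
  · rintro ⟨S, hind, hScard⟩
    set owner : Fin m → Fin n := fun j =>
      if (ep j).1 ∈ S then (ep j).1 else if (ep j).2 ∈ S then (ep j).2 else (ep j).1
      with howner
    have howner_incid : ∀ j, Incid ep (owner j) j := by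
      intro j
      rw [howner]
      dsimp only
      split_ifs with h1 h2
      · exact Or.inl rfl
      · exact Or.inr rfl
      · exact Or.inl rfl
    have howner_S : ∀ j v, v ∈ S → Incid ep v j → owner j = v := by
      intro j v hv hinc
      rcases hinc with h | h
      · rw [howner]; dsimp only; rw [if_pos (h ▸ hv)]; exact h.symm
      · have h1 : (ep j).1 ∉ S := fun hh => hind j ⟨hh, h ▸ hv⟩
        rw [howner]; dsimp only; rw [if_neg h1, if_pos (h ▸ hv)]; exact h.symm
    set M0 : Finset (Fin n × ((Fin n) ⊕ (Fin m))) :=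
      (S.image fun i => (i, (Sum.inl i : (Fin n) ⊕ (Fin m)))) ∪
        (Finset.univ.image fun j => (owner j, (Sum.inr j : (Fin n) ⊕ (Fin m))))
      with hM0
    have hM0mem : ∀ p : Fin n × ((Fin n) ⊕ (Fin m)),
        p ∈ M0 ↔ (∃ i ∈ S, p = (i, Sum.inl i)) ∨ ∃ j, p = (owner j, Sum.inr j) := by
      intro p
      rw [hM0]
      simp only [Finset.mem_union, Finset.mem_image, Finset.mem_univ, true_and]
      constructor
      · rintro (⟨i, hi, rfl⟩ | ⟨j, rfl⟩)
        · exact Or.inl ⟨i, hi, rfl⟩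
        · exact Or.inr ⟨j, rfl⟩
      · rintro (⟨i, hi, rfl⟩ | ⟨j, rfl⟩)
        · exact Or.inl ⟨i, hi, rfl⟩
        · exact Or.inr ⟨j, rfl⟩
    have hmem0 : ∀ a c, c ∈ bundle M0 a ↔
        (a ∈ S ∧ c = Sum.inl a) ∨ ∃ j, owner j = a ∧ c = Sum.inr j := by
      intro a c
      rw [mem_bundle, hM0mem]
      constructor
      · rintro (⟨i, hi, hp⟩ | ⟨j, hp⟩)
        · rw [Prod.mk.injEq] at hp
          obtain ⟨rfl, rfl⟩ := hp
          exact Or.inl ⟨hi, rfl⟩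
        · rw [Prod.mk.injEq] at hp
          obtain ⟨rfl, rfl⟩ := hp
          exact Or.inr ⟨j, rfl, rfl⟩
      · rintro (⟨ha, rfl⟩ | ⟨j, rfl, rfl⟩)
        · exact Or.inl ⟨a, ha, rfl⟩
        · exact Or.inr ⟨j, rfl⟩
    have hfull0 : ∀ a ∈ S, bundle M0 a = (pref a).toFinset := by
      intro a ha
      ext c
      rw [hmem0, List.mem_toFinset, hmem_pref]
      constructor
      · rintro (⟨-, rfl⟩ | ⟨j, hj, rfl⟩)
        · exact Or.inl rfl
        · exact Or.inr ⟨j, hj ▸ howner_incid j, rfl⟩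
      · rintro (rfl | ⟨j, hij, rfl⟩)
        · exact Or.inl ⟨ha, rfl⟩
        · exact Or.inr ⟨j, howner_S j a ha hij, rfl⟩
    have hacc0 : ∀ a, ∀ c ∈ bundle M0 a, c ∈ pref a := by
      intro a c hc
      rw [hmem0] at hc
      rw [hmem_pref]
      rcases hc with ⟨-, rfl⟩ | ⟨j, hj, rfl⟩
      · exact Or.inl rfl
      · exact Or.inr ⟨j, hj ▸ howner_incid j, rfl⟩
    have hmatch0 : IsMatching pref (fun _ => 4) (fun _ => 1) prereq M0 := by
      constructor
      · intro a
        refine ⟨hacc0 a, ?_, ?_⟩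
        · have hsub : bundle M0 a ⊆ (pref a).toFinset :=
            fun c hc => List.mem_toFinset.2 (hacc0 a c hc)
          calc (bundle M0 a).card ≤ (pref a).toFinset.card := Finset.card_le_card hsub
            _ ≤ (pref a).length := (pref a).toFinset_card_le
            _ = 4 := hpreflen a
        · rintro c hc c' ⟨v, j, rfl, rfl, hincid⟩
          rw [hmem0] at hc
          rcases hc with ⟨ha, hv⟩ | ⟨j', -, h⟩
          · obtain rfl : v = a := Sum.inl.inj hv
            rw [hmem0]
            exact Or.inr ⟨j, howner_S j v ha hincid, rfl⟩
          · exact absurd h (by simp)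
      · intro c
        show (M0.filter (fun p => p.2 = c)).card ≤ 1
        refine Finset.card_le_one.2 ?_
        intro p hp q hq
        rw [Finset.mem_filter] at hp hq
        obtain ⟨hpM, hpc⟩ := hp
        obtain ⟨hqM, hqc⟩ := hq
        rw [hM0mem] at hpM hqM
        rcases hpM with ⟨i, hi, rfl⟩ | ⟨j, rfl⟩ <;> rcases hqM with ⟨i', hi', rfl⟩ | ⟨j', rfl⟩
        · simp only at hpc hqc
          obtain rfl : i = i' := Sum.inl.inj (hpc.trans hqc.symm)
          rfl
        · simp only at hpc hqc
          exact absurd (hpc.trans hqc.symm) (by simp)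
        · simp only at hpc hqc
          exact absurd (hpc.trans hqc.symm) (by simp)
        · simp only at hpc hqc
          obtain rfl : j = j' := Sum.inr.inj (hpc.trans hqc.symm)
          rfl
    set P : Finset (Fin n × ((Fin n) ⊕ (Fin m))) → Prop := fun M =>
      IsMatching pref (fun _ => 4) (fun _ => 1) prereq M ∧
        ∀ a, wt (pref a) (bundle M0 a) ≤ wt (pref a) (bundle M a) with hP
    have hM0P : P M0 := ⟨hmatch0, fun a => le_refl _⟩
    obtain ⟨Mstar, hMstarmem, hmax⟩ := Finset.exists_max_image
      (Finset.univ.filter P) (fun M => ∑ a, wt (pref a) (bundle M a))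
      ⟨M0, Finset.mem_filter.2 ⟨Finset.mem_univ _, hM0P⟩⟩
    obtain ⟨hmatchS, hwtS⟩ := (Finset.mem_filter.1 hMstarmem).2
    have hmax' : ∀ M', P M' →
        ∑ a, wt (pref a) (bundle M' a) ≤ ∑ a, wt (pref a) (bundle Mstar a) :=
      fun M' h => hmax M' (Finset.mem_filter.2 ⟨Finset.mem_univ _, h⟩)
    refine ⟨Mstar, ⟨hmatchS, ?_⟩, ?_⟩
    · rintro M' hM' ⟨⟨a0, ha0⟩, hnw⟩
      have hge : ∀ a, wt (pref a) (bundle Mstar a) ≤ wt (pref a) (bundle M' a) := by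
        intro a
        by_contra hlt
        exact hnw a ((lexPrefers_iff_wt (hmatchS.1 a).1 (hM'.1 a).1).2
          (lt_of_not_ge hlt))
      have hgt : wt (pref a0) (bundle Mstar a0) < wt (pref a0) (bundle M' a0) :=
        (lexPrefers_iff_wt (hM'.1 a0).1 (hmatchS.1 a0).1).1 ha0
      have hP' : P M' := ⟨hM', fun a => le_trans (hwtS a) (hge a)⟩
      have hlt : ∑ a, wt (pref a) (bundle Mstar a) < ∑ a, wt (pref a) (bundle M' a) :=
        Finset.sum_lt_sum (fun a _ => hge a) ⟨a0, Finset.mem_univ _, hgt⟩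
      have := hmax' M' hP'
      omega
    · have hfullS : ∀ v ∈ S, (v, (Sum.inl v : (Fin n) ⊕ (Fin m))) ∈ Mstar := by
        intro v hv
        have h1 : wt (pref v) ((pref v).toFinset) ≤ wt (pref v) (bundle Mstar v) := by
          have := hwtS v
          rwa [hfull0 v hv] at this
        have h2 : bundle Mstar v = (pref v).toFinset :=
          eq_full_of_wt_ge (hmatchS.1 v).1 h1
        have h3 : Sum.inl v ∈ bundle Mstar v := by
          rw [h2, List.mem_toFinset, hmem_pref]
          exact Or.inl rfl
        exact mem_bundle.1 h3
      have hsat : ∀ j, 1 ≤ slots Mstar (Sum.inr j) := by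
        intro j
        by_contra h0
        have hs0 : (Mstar.filter (fun p => p.2 = (Sum.inr j : (Fin n) ⊕ (Fin m)))).card = 0 := by
          have : slots Mstar (Sum.inr j) = 0 := by omega
          exact this
        have hemp : Mstar.filter (fun p => p.2 = (Sum.inr j : (Fin n) ⊕ (Fin m))) = ∅ :=
          Finset.card_eq_zero.1 hs0
        have hinc : Incid ep (ep j).1 j := Or.inl rfl
        have hno_j : ∀ a, Sum.inr j ∉ bundle Mstar a := by
          intro a hmem
          have hp : (a, (Sum.inr j : (Fin n) ⊕ (Fin m))) ∈
              Mstar.filter (fun p => p.2 = Sum.inr j) :=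
            Finset.mem_filter.2 ⟨mem_bundle.1 hmem, rfl⟩
          rw [hemp] at hp
          exact absurd hp (Finset.notMem_empty _)
        have hno_l : Sum.inl (ep j).1 ∉ bundle Mstar (ep j).1 := by
          intro hmem
          exact hno_j (ep j).1
            ((hmatchS.1 (ep j).1).2.2 _ hmem _ ⟨(ep j).1, j, rfl, rfl, hinc⟩)
        have hb'' : ∀ a, bundle (insert ((ep j).1, (Sum.inr j : (Fin n) ⊕ (Fin m))) Mstar) a =
            if (ep j).1 = a then insert (Sum.inr j) (bundle Mstar a) else bundle Mstar a :=
          fun a => bundle_insert (ep j).1 (Sum.inr j) Mstar a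
        have hbi : bundle (insert ((ep j).1, (Sum.inr j : (Fin n) ⊕ (Fin m))) Mstar) (ep j).1 =
            insert (Sum.inr j) (bundle Mstar (ep j).1) := by
          rw [hb'' (ep j).1, if_pos rfl]
        have hcard3 : (bundle Mstar (ep j).1).card ≤ 3 := by
          have hsub3 : bundle Mstar (ep j).1 ⊆ ((elist (ep j).1).map Sum.inr).toFinset := by
            intro c hc
            have hcp := (hmatchS.1 (ep j).1).1 c hc
            rw [hmem_pref] at hcp
            rcases hcp with rfl | ⟨j', hj', rfl⟩
            · exact absurd hc hno_l
            · rw [List.mem_toFinset]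
              exact List.mem_map.2 ⟨j', ((helist (ep j).1).2 j').2 hj', rfl⟩
          calc (bundle Mstar (ep j).1).card
              ≤ ((elist (ep j).1).map Sum.inr).toFinset.card := Finset.card_le_card hsub3
            _ ≤ ((elist (ep j).1).map Sum.inr).length := List.toFinset_card_le _
            _ = 3 := by rw [List.length_map, hlen]
        have hmatch'' : IsMatching pref (fun _ => 4) (fun _ => 1) prereq
            (insert ((ep j).1, (Sum.inr j : (Fin n) ⊕ (Fin m))) Mstar) := by
          constructor
          · intro a
            by_cases ha : (ep j).1 = a
            · subst ha
              rw [hbi]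
              refine ⟨?_, ?_, ?_⟩
              · intro c hc
                rcases Finset.mem_insert.1 hc with rfl | hc
                · rw [hmem_pref]
                  exact Or.inr ⟨j, hinc, rfl⟩
                · exact (hmatchS.1 (ep j).1).1 c hc
              · have := Finset.card_insert_le (Sum.inr j : (Fin n) ⊕ (Fin m))
                  (bundle Mstar (ep j).1)
                show _ ≤ 4
                omega
              · rintro c hc c' ⟨v, j', rfl, rfl, hincid'⟩
                rcases Finset.mem_insert.1 hc with hc | hc
                · exact absurd hc (by simp)
                · have hcp := (hmatchS.1 (ep j).1).1 _ hc
                  rw [hmem_pref] at hcp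
                  rcases hcp with hh | ⟨j'', -, hh⟩
                  · obtain rfl : v = (ep j).1 := Sum.inl.inj hh
                    exact absurd hc hno_l
                  · exact absurd hh (by simp)
            · rw [hb'' a, if_neg ha]
              exact hmatchS.1 a
          · intro c
            show ((insert ((ep j).1, (Sum.inr j : (Fin n) ⊕ (Fin m))) Mstar).filter
              (fun p => p.2 = c)).card ≤ 1
            rw [Finset.filter_insert]
            by_cases hc : (Sum.inr j : (Fin n) ⊕ (Fin m)) = c
            · rw [if_pos hc]
              subst hc
              rw [hemp]
              simp
            · rw [if_neg hc]
              exact hmatchS.2 c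
        have hP'' : P (insert ((ep j).1, (Sum.inr j : (Fin n) ⊕ (Fin m))) Mstar) := by
          refine ⟨hmatch'', fun a => ?_⟩
          by_cases ha : (ep j).1 = a
          · subst ha
            rw [hbi]
            exact le_trans (hwtS (ep j).1)
              (Finset.sum_le_sum_of_subset (Finset.subset_insert _ _))
          · rw [hb'' a, if_neg ha]
            exact hwtS a
        have hlt : ∑ a, wt (pref a) (bundle Mstar a) <
            ∑ a, wt (pref a)
              (bundle (insert ((ep j).1, (Sum.inr j : (Fin n) ⊕ (Fin m))) Mstar) a) := by
          refine Finset.sum_lt_sum (fun a _ => ?_) ⟨(ep j).1, Finset.mem_univ _, ?_⟩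
          · by_cases ha : (ep j).1 = a
            · subst ha
              rw [hbi]
              exact Finset.sum_le_sum_of_subset (Finset.subset_insert _ _)
            · rw [hb'' a, if_neg ha]
          · rw [hbi]
            show wt _ _ < wt _ _
            unfold wt
            rw [Finset.sum_insert (hno_j (ep j).1)]
            exact lt_add_of_pos_left _ (pow_pos (by norm_num) _)
        have := hmax' _ hP''
        omega
      have hcount : Mstar.card = ∑ c, slots Mstar c := card_eq_sum_slots Mstar
      rw [Fintype.sum_sum_type] at hcount
      have h1 : (m : ℕ) ≤ ∑ j : Fin m, slots Mstar (Sum.inr j) := by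
        calc (m : ℕ) = ∑ _j : Fin m, 1 := by simp
          _ ≤ ∑ j : Fin m, slots Mstar (Sum.inr j) := Finset.sum_le_sum (fun j _ => hsat j)
      have h2 : S.card ≤ ∑ v : Fin n, slots Mstar (Sum.inl v) := by
        calc S.card = ∑ _v ∈ S, 1 := by simp
          _ ≤ ∑ v ∈ S, slots Mstar (Sum.inl v) := by
              refine Finset.sum_le_sum ?_
              intro v hv
              exact Finset.card_pos.2 ⟨(v, Sum.inl v),
                Finset.mem_filter.2 ⟨hfullS v hv, rfl⟩⟩
          _ ≤ ∑ v : Fin n, slots Mstar (Sum.inl v) :=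
              Finset.sum_le_sum_of_subset (Finset.subset_univ S)
      omega
  · rintro ⟨M, ⟨⟨hfeas, hslots⟩, -⟩, hcard⟩
    refine ⟨Finset.univ.filter (fun i => Sum.inl i ∈ bundle M i), ?_, ?_⟩
    · rintro j ⟨h1, h2⟩
      rw [Finset.mem_filter] at h1 h2
      have hb1 : Sum.inr j ∈ bundle M (ep j).1 :=
        (hfeas (ep j).1).2.2 _ h1.2 _ ⟨(ep j).1, j, rfl, rfl, Or.inl rfl⟩
      have hb2 : Sum.inr j ∈ bundle M (ep j).2 :=
        (hfeas (ep j).2).2.2 _ h2.2 _ ⟨(ep j).2, j, rfl, rfl, Or.inr rfl⟩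
      have hsub : ({((ep j).1, Sum.inr j), ((ep j).2, Sum.inr j)} :
          Finset (Fin n × ((Fin n) ⊕ (Fin m)))) ⊆ M.filter (fun p => p.2 = Sum.inr j) := by
        intro p hp
        rcases Finset.mem_insert.1 hp with rfl | hp
        · exact Finset.mem_filter.2 ⟨mem_bundle.1 hb1, rfl⟩
        · rw [Finset.mem_singleton] at hp
          subst hp
          exact Finset.mem_filter.2 ⟨mem_bundle.1 hb2, rfl⟩
      have hc2 : ({((ep j).1, Sum.inr j), ((ep j).2, Sum.inr j)} :
          Finset (Fin n × ((Fin n) ⊕ (Fin m)))).card = 2 := by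
        rw [Finset.card_insert_of_notMem, Finset.card_singleton]
        simp only [Finset.mem_singleton, Prod.mk.injEq]
        exact fun h => hloop j h.1
      have hle := Finset.card_le_card hsub
      rw [hc2] at hle
      have hs : (M.filter (fun p => p.2 = Sum.inr j)).card ≤ 1 := hslots (Sum.inr j)
      omega
    · have h1 : M.card = ∑ c, slots M c := card_eq_sum_slots M
      rw [Fintype.sum_sum_type] at h1
      have h2 : ∑ j : Fin m, slots M (Sum.inr j) ≤ m := by
        calc ∑ j : Fin m, slots M (Sum.inr j) ≤ ∑ _j : Fin m, 1 :=
              Finset.sum_le_sum (fun j _ => hslots (Sum.inr j))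
          _ = m := by simp
      have h3 : ∑ v : Fin n, slots M (Sum.inl v) ≤
          (Finset.univ.filter (fun i => Sum.inl i ∈ bundle M i)).card := by
        rw [Finset.card_filter]
        refine Finset.sum_le_sum ?_
        intro v _
        by_cases hv : Sum.inl v ∈ bundle M v
        · rw [if_pos hv]; exact hslots (Sum.inl v)
        · rw [if_neg hv]
          have : M.filter (fun p => p.2 = Sum.inl v) = ∅ := by
            rw [Finset.filter_eq_empty_iff]
            rintro ⟨a, c⟩ hp rfl
            have hacc := (hfeas a).1 _ (mem_bundle.2 hp)
            rw [hmem_pref] at hacc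
            rcases hacc with hh | ⟨j, _, hh⟩
            · obtain rfl : v = a := Sum.inl.inj hh
              exact hv (mem_bundle.2 hp)
            · exact absurd hh (by simp)
          unfold slots
          rw [this, Finset.card_empty]
      omega
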